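/- arXiv:2405.07262 — 2 statements merged into one kernel-verified Lean document; each statement's English description precedes it below -/
import Mathlib

section
/- Let M > 0, Ψ > 0, δ ∈ (0, M/2], and set ε₁ := (Ψ + 1/δ)^{-1}. Let ξ : [0, ω) → ℝ be continuously differentiable with -M < ξ(t) < 0 for all t, -M + δ ≤ ξ(0) ≤ -δ, and ξ'(t) = w(t) + 1/ξ(t) + 1/(M + ξ(t)) where |w(t)| ≤ Ψ for all t. Then -M + ε₁ ≤ ξ(t) ≤ -ε₁ for all t ∈ [0, ω). -/
theorem spacing_upper_aux
    (M Ψ δ : ℝ) (hM : 0 < M) (hΨ : 0 < Ψ) (hδ : δ ∈ Set.Ioc 0 (M / 2))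
    (ε₁ : ℝ) (hε₁ : ε₁ = (Ψ + 1 / δ)⁻¹)
    (ω : EReal)
    (ξ w : ℝ → ℝ)
    (hrange : ∀ t : ℝ, 0 ≤ t → (t : EReal) < ω → -M < ξ t ∧ ξ t < 0)
    (hode : ∀ t : ℝ, 0 ≤ t → (t : EReal) < ω →
      HasDerivAt ξ (w t + 1 / ξ t + 1 / (M + ξ t)) t)
    (hwbd : ∀ t : ℝ, 0 ≤ t → (t : EReal) < ω → |w t| ≤ Ψ)
    (hinit : ξ 0 ≤ -δ) :
    ∀ t : ℝ, 0 ≤ t → (t : EReal) < ω → ξ t ≤ -ε₁ := by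
  obtain ⟨hδ0, hδM⟩ := hδ
  have hsum : 0 < Ψ + 1 / δ := by positivity
  have hε₁pos : 0 < ε₁ := by rw [hε₁]; positivity
  have hε₁δ : ε₁ < δ := by
    rw [hε₁]
    rw [inv_lt_iff_one_lt_mul₀ hsum]
    have : 1 / δ * δ = 1 := by field_simp
    nlinarith
  have hinvε₁ : 1 / ε₁ = Ψ + 1 / δ := by
    rw [hε₁, one_div, inv_inv]
  intro t ht htω
  by_contra hcon
  push_neg at hcon
  -- each u in [0, t] is within the domain
  have hdom : ∀ u : ℝ, u ∈ Set.Icc 0 t → 0 ≤ u ∧ (u : EReal) < ω := by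
    intro u hu
    refine ⟨hu.1, lt_of_le_of_lt ?_ htω⟩
    exact_mod_cast EReal.coe_le_coe_iff.mpr hu.2
  have hcont : ContinuousOn ξ (Set.Icc 0 t) := by
    intro u hu
    exact ((hode u (hdom u hu).1 (hdom u hu).2).continuousAt).continuousWithinAt
  -- the set where ξ ≤ -ε₁
  set S : Set ℝ := {u | u ∈ Set.Icc 0 t ∧ ξ u ≤ -ε₁} with hS
  have h0S : (0 : ℝ) ∈ S := by
    constructor
    · exact ⟨le_refl 0, ht⟩
    · linarith
  have hSbdd : BddAbove S := ⟨t, fun u hu => hu.1.2⟩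
  have hSclosed : IsClosed S := by
    have hSeq : S = Set.Icc 0 t ∩ ξ ⁻¹' Set.Iic (-ε₁) := rfl
    rw [hSeq]
    exact ContinuousOn.preimage_isClosed_of_isClosed hcont isClosed_Icc isClosed_Iic
  set s := sSup S with hs
  have hsS : s ∈ S := hSclosed.csSup_mem ⟨0, h0S⟩ hSbdd
  have hs0 : 0 ≤ s := hsS.1.1
  have hst : s ≤ t := hsS.1.2
  have hξs : ξ s ≤ -ε₁ := hsS.2
  have hsnet : s ≠ t := by
    intro h; rw [h] at hξs; linarith
  have hslt : s < t := lt_of_le_of_ne hst hsnet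
  -- on (s, t], ξ > -ε₁
  have hgt : ∀ u : ℝ, s < u → u ≤ t → -ε₁ < ξ u := by
    intro u hsu hut
    by_contra h
    push_neg at h
    have : u ∈ S := ⟨⟨le_trans hs0 hsu.le, hut⟩, h⟩
    exact absurd (le_csSup hSbdd this) (not_le.mpr hsu)
  -- ξ is strictly decreasing on [s, t]
  have hanti : StrictAntiOn ξ (Set.Icc s t) := by
    apply strictAntiOn_of_deriv_neg (convex_Icc s t)
    · exact hcont.mono (Set.Icc_subset_Icc_left hs0)
    · intro x hx
      rw [interior_Icc] at hx
      have hxdom := hdom x ⟨le_trans hs0 hx.1.le, hx.2.le⟩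
      have hd := hode x hxdom.1 hxdom.2
      rw [hd.deriv]
      have hξx1 : -ε₁ < ξ x := hgt x hx.1 hx.2.le
      have hξx2 : ξ x < 0 := (hrange x hxdom.1 hxdom.2).2
      have hwx : w x ≤ Ψ := (abs_le.mp (hwbd x hxdom.1 hxdom.2)).2
      -- 1/ξ x < -(Ψ + 1/δ)
      have h1 : 1 / ξ x < -(Ψ + 1 / δ) := by
        have hpos : 0 < -ξ x := by linarith
        have h := one_div_lt_one_div_of_lt hpos (by linarith : -ξ x < ε₁)
        rw [one_div_neg_eq_neg_one_div, hinvε₁] at h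
        linarith
      -- 1/(M + ξ x) < 1/δ
      have h2 : 1 / (M + ξ x) < 1 / δ := by
        have hMx : δ < M + ξ x := by linarith
        exact one_div_lt_one_div_of_lt hδ0 hMx
      linarith
  have := hanti ⟨le_refl s, hst⟩ ⟨hst, le_refl t⟩ hslt
  linarith

theorem spacing_invariance
    (M Ψ δ : ℝ) (hM : 0 < M) (hΨ : 0 < Ψ) (hδ : δ ∈ Set.Ioc 0 (M / 2))
    (ε₁ : ℝ) (hε₁ : ε₁ = (Ψ + 1 / δ)⁻¹)
    (ω : EReal) (hω : 0 < ω)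
    (ξ w : ℝ → ℝ)
    (hrange : ∀ t : ℝ, 0 ≤ t → (t : EReal) < ω → -M < ξ t ∧ ξ t < 0)
    (hode : ∀ t : ℝ, 0 ≤ t → (t : EReal) < ω →
      HasDerivAt ξ (w t + 1 / ξ t + 1 / (M + ξ t)) t)
    (hwbd : ∀ t : ℝ, 0 ≤ t → (t : EReal) < ω → |w t| ≤ Ψ)
    (hinit : -M + δ ≤ ξ 0 ∧ ξ 0 ≤ -δ) :
    ∀ t : ℝ, 0 ≤ t → (t : EReal) < ω → -M + ε₁ ≤ ξ t ∧ ξ t ≤ -ε₁ := by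
  intro t ht htω
  have hupper := spacing_upper_aux M Ψ δ hM hΨ hδ ε₁ hε₁ ω ξ w hrange hode hwbd hinit.2 t ht htω
  refine ⟨?_, hupper⟩
  -- symmetry: η = -M - ξ satisfies the same system with w' = -w
  set η : ℝ → ℝ := fun u => -M - ξ u with hη
  set w' : ℝ → ℝ := fun u => -w u with hw'
  have hrange' : ∀ u : ℝ, 0 ≤ u → (u : EReal) < ω → -M < η u ∧ η u < 0 := by
    intro u hu huω
    have := hrange u hu huω
    constructor <;> simp [hη] <;> linarith [this.1, this.2]
  have hode' : ∀ u : ℝ, 0 ≤ u → (u : EReal) < ω →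
      HasDerivAt η (w' u + 1 / η u + 1 / (M + η u)) u := by
    intro u hu huω
    have hd := (hode u hu huω).const_sub (-M)
    convert hd using 1
    case e'_4 => rfl
    case e'_5 => rfl
    have h1 : η u = -(M + ξ u) := by simp [hη]; ring
    rw [h1]
    have h3 : M + -(M + ξ u) = -ξ u := by ring
    rw [h3, one_div_neg_eq_neg_one_div, one_div_neg_eq_neg_one_div]
    simp [hw']
    ring
  have hwbd' : ∀ u : ℝ, 0 ≤ u → (u : EReal) < ω → |w' u| ≤ Ψ := by
    intro u hu huω
    simpa [hw', abs_neg] using hwbd u hu huω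
  have hinit' : η 0 ≤ -δ := by simp [hη]; linarith [hinit.1]
  have := spacing_upper_aux M Ψ δ hM hΨ hδ ε₁ hε₁ ω η w' hrange' hode' hwbd' hinit' t ht htω
  simp [hη] at this
  linarith
end

section
/- Let p, q ∈ (0,1) with (1+p)q < 1 and constants c₁, c₂ > 0, c₃, c₄ ≥ 0. Then there exists K > 0 such that for all k₂ ≥ K, the sequence defined by z_{N₀} = z₀ > 0 arbitrary fixed (with z₀ ≤ ẑ) and z_i = ((1+p)q + c₁/k₂) z_{i-1} + (c₂/k₂²) z_{i-1}² + k₂ c₃ + c₄ for i > N₀ is bounded above by ẑ := k₂²(1-α)/(2c₂) + √(k₂⁴(1-α)²/(4c₂²) - (k₂²/c₂)(k₂c₃+c₄)), where α = (1+p)q + c₁/k₂; in particular (z_i) is bounded uniformly in i. -/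
private lemma qrb_fix (α c₂ c₃ c₄ k₂ s : ℝ) (hkne : k₂ ≠ 0) (hcne : c₂ ≠ 0)
    (hs2' : s ^ 2 * (4 * c₂ ^ 2) = k₂ ^ 4 * (1 - α) ^ 2 - 4 * c₂ * k₂ ^ 2 * (k₂ * c₃ + c₄)) :
    α * (k₂ ^ 2 * (1 - α) / (2 * c₂) + s) + (c₂ / k₂ ^ 2) * (k₂ ^ 2 * (1 - α) / (2 * c₂) + s) ^ 2 +
      k₂ * c₃ + c₄ = k₂ ^ 2 * (1 - α) / (2 * c₂) + s := by
  field_simp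
  linear_combination hs2'

private lemma qrb_disc (δ α c₂ c₃ c₄ k₂ : ℝ) (hc₂ : 0 < c₂) (hc₄ : 0 ≤ c₄)
    (hk1 : 1 ≤ k₂)
    (hk34 : 32 * c₂ * (c₃ + c₄) ≤ k₂ * δ ^ 2)
    (h2 : δ ^ 2 / 4 ≤ (1 - α) ^ 2) :
    k₂ ^ 2 * (k₂ * c₃ + c₄) * (4 * c₂ ^ 2) ≤ k₂ ^ 4 * (1 - α) ^ 2 * c₂ := by
  nlinarith [mul_le_mul_of_nonneg_left hk34 (by positivity : (0:ℝ) ≤ k₂ ^ 3 * c₂),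
    mul_le_mul_of_nonneg_left h2 (by positivity : (0:ℝ) ≤ k₂ ^ 4 * c₂),
    mul_nonneg (sq_nonneg c₂) (mul_nonneg (mul_nonneg (sub_nonneg.mpr hk1) (sq_nonneg k₂)) hc₄),
    mul_nonneg (by positivity : (0:ℝ) ≤ c₂ * k₂ ^ 4) (sq_nonneg (1 - α)), hc₂]


set_option maxHeartbeats 1000000 in
theorem quadratic_recursion_bounded
    (p q c₁ c₂ c₃ c₄ : ℝ)
    (hp : p ∈ Set.Ioo (0:ℝ) 1) (hq : q ∈ Set.Ioo (0:ℝ) 1) (hpq : (1 + p) * q < 1)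
    (hc₁ : 0 < c₁) (hc₂ : 0 < c₂) (hc₃ : 0 ≤ c₃) (hc₄ : 0 ≤ c₄) (N₀ : ℕ) :
    ∃ K > 0, ∀ k₂ ≥ K,
      ∀ z : ℕ → ℝ,
        0 < z N₀ →
        z N₀ ≤ (k₂ ^ 2 * (1 - ((1 + p) * q + c₁ / k₂)) / (2 * c₂) +
          Real.sqrt (k₂ ^ 4 * (1 - ((1 + p) * q + c₁ / k₂)) ^ 2 / (4 * c₂ ^ 2) -
            (k₂ ^ 2 / c₂) * (k₂ * c₃ + c₄))) →
        (∀ i : ℕ, N₀ < i →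
          z i = ((1 + p) * q + c₁ / k₂) * z (i - 1) + (c₂ / k₂ ^ 2) * z (i - 1) ^ 2 +
            k₂ * c₃ + c₄) →
        ∀ i : ℕ, N₀ ≤ i →
          z i ≤ k₂ ^ 2 * (1 - ((1 + p) * q + c₁ / k₂)) / (2 * c₂) +
            Real.sqrt (k₂ ^ 4 * (1 - ((1 + p) * q + c₁ / k₂)) ^ 2 / (4 * c₂ ^ 2) -
              (k₂ ^ 2 / c₂) * (k₂ * c₃ + c₄)) := by
  obtain ⟨hp0, hp1⟩ := hp
  obtain ⟨hq0, hq1⟩ := hq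
  have hδ0 : 0 < 1 - (1 + p) * q := by linarith
  set δ : ℝ := 1 - (1 + p) * q with hδ
  refine ⟨max 1 (max (2 * c₁ / δ) (32 * c₂ * (c₃ + c₄) / δ ^ 2)), by positivity, ?_⟩
  intro k₂ hk₂ z hz0 hzN hrec
  have hk1 : (1:ℝ) ≤ k₂ := le_trans (le_max_left _ _) hk₂
  have hk0 : 0 < k₂ := by linarith
  have hkne : k₂ ≠ 0 := ne_of_gt hk0
  have hcne : c₂ ≠ 0 := ne_of_gt hc₂
  set α : ℝ := (1 + p) * q + c₁ / k₂ with hα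
  have hα0 : 0 < α := by
    have h1 : 0 < (1 + p) * q := mul_pos (by linarith) hq0
    have h2 : 0 < c₁ / k₂ := div_pos hc₁ hk0
    simp only [hα]; linarith
  -- 1 - α ≥ δ/2
  have hkc₁ : 2 * c₁ / δ ≤ k₂ := le_trans (le_trans (le_max_left _ _) (le_max_right _ _)) hk₂
  have hc₁k : c₁ / k₂ ≤ δ / 2 := by
    rw [div_le_div_iff₀ hk0 (by norm_num)]
    rw [div_le_iff₀ hδ0] at hkc₁
    linarith
  have h1α : δ / 2 ≤ 1 - α := by simp only [hα, hδ]; linarith [hc₁k]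
  -- discriminant nonneg
  have hkc34 : 32 * c₂ * (c₃ + c₄) / δ ^ 2 ≤ k₂ :=
    le_trans (le_trans (le_max_right _ _) (le_max_right _ _)) hk₂
  have hk34 : 32 * c₂ * (c₃ + c₄) ≤ k₂ * δ ^ 2 := by
    rw [div_le_iff₀ (by positivity)] at hkc34; linarith
  set D : ℝ := k₂ ^ 4 * (1 - α) ^ 2 / (4 * c₂ ^ 2) - (k₂ ^ 2 / c₂) * (k₂ * c₃ + c₄) with hD
  have hD0 : 0 ≤ D := by
    rw [hD, sub_nonneg, div_mul_eq_mul_div, div_le_div_iff₀ hc₂ (by positivity)]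
    have h2 : δ ^ 2 / 4 ≤ (1 - α) ^ 2 := by nlinarith [h1α, hδ0]
    exact qrb_disc δ α c₂ c₃ c₄ k₂ hc₂ hc₄ hk1 hk34 h2
  set s : ℝ := Real.sqrt D with hs
  have hs0 : 0 ≤ s := Real.sqrt_nonneg _
  have hs2 : s ^ 2 = D := Real.sq_sqrt hD0
  set Z : ℝ := k₂ ^ 2 * (1 - α) / (2 * c₂) + s with hZ
  clear_value δ α D s Z
  have hs2' : s ^ 2 * (4 * c₂ ^ 2) = k₂ ^ 4 * (1 - α) ^ 2 - 4 * c₂ * k₂ ^ 2 * (k₂ * c₃ + c₄) := by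
    rw [hs2, hD]; field_simp
  have hfix : α * Z + (c₂ / k₂ ^ 2) * Z ^ 2 + k₂ * c₃ + c₄ = Z := by
    rw [hZ]
    exact qrb_fix α c₂ c₃ c₄ k₂ s hkne hcne hs2'
  have key : ∀ i : ℕ, N₀ ≤ i → 0 < z i ∧ z i ≤ Z := by
    intro i hi
    induction i, hi using Nat.le_induction with
    | base => exact ⟨hz0, hzN⟩
    | succ n hn ih =>
      obtain ⟨h1, h2⟩ := ih
      have hr := hrec (n + 1) (by omega)
      simp only [Nat.add_sub_cancel] at hr
      have hcc : 0 < c₂ / k₂ ^ 2 := by positivity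
      constructor
      · rw [hr]
        have ha : 0 < α * z n := mul_pos hα0 h1
        have hb : 0 < c₂ / k₂ ^ 2 * z n ^ 2 := by positivity
        have hc : 0 ≤ k₂ * c₃ := mul_nonneg hk0.le hc₃
        linarith
      · have hA : 0 ≤ α * (Z - z n) := mul_nonneg hα0.le (sub_nonneg.mpr h2)
        have hB : 0 ≤ c₂ / k₂ ^ 2 * ((Z - z n) * (Z + z n)) :=
          mul_nonneg hcc.le (mul_nonneg (sub_nonneg.mpr h2) (by linarith))
        have hE : α * z n + c₂ / k₂ ^ 2 * z n ^ 2 + k₂ * c₃ + c₄ =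
            Z - (α * (Z - z n) + c₂ / k₂ ^ 2 * ((Z - z n) * (Z + z n))) := by
          linear_combination hfix
        rw [hr, hE]
        linarith
  intro i hi
  exact (key i hi).2
end
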